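/- Let F be a real d×m matrix with orthonormal columns (FᵀF = I_m), and let c₀, x, y ∈ ℝ^d. Define f(s) := max(‖Fs+c₀−x‖, ‖Fs+c₀−y‖) for s ∈ ℝ^m, and set s_x := Fᵀ(x−c₀), s_y := Fᵀ(y−c₀), r_x(x) := ‖F s_x + c₀ − x‖, r_x(y) := ‖F s_x + c₀ − y‖, r_y(x) := ‖F s_y + c₀ − x‖, r_y(y) := ‖F s_y + c₀ − y‖. Then: (i) if r_x(x) ≥ r_x(y), the infimum of f over ℝ^m equals r_x(x) and is attained at s_x; (ii) if r_y(y) ≥ r_y(x), the infimum of f equals r_y(y) and is attained at s_y; (iii) if r_x(x) < r_x(y) and r_y(y) < r_y(x), then the infimum of f over ℝ^m equals the infimum of ‖Fs+c₀−x‖ over the set {s ∈ ℝ^m : ‖Fs+c₀−x‖ = ‖Fs+c₀−y‖}. -/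

import Mathlib

set_option maxHeartbeats 1000000


noncomputable section

open Matrix

/-- View a plain vector `Fin n → ℝ` as a point of Euclidean space. -/
def toE {n : ℕ} (v : Fin n → ℝ) : EuclideanSpace ℝ (Fin n) :=
  (WithLp.equiv 2 (Fin n → ℝ)).symm v

/-- View a point of Euclidean space as a plain vector `Fin n → ℝ`. -/
def ofE {n : ℕ} (v : EuclideanSpace ℝ (Fin n)) : Fin n → ℝ :=
  (WithLp.equiv 2 (Fin n → ℝ)) v

/-- Solution of the relaxed optimization problem: for a matrix `F` with orthonormal
columns and `f(s) = max(‖Fs + c₀ − x‖, ‖Fs + c₀ − y‖)`, with candidates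
`s_x = Fᵀ(x − c₀)` and `s_y = Fᵀ(y − c₀)`:
(i) if `r_x(x) ≥ r_x(y)` the infimum of `f` is `r_x(x)`, attained at `s_x`;
(ii) if `r_y(y) ≥ r_y(x)` the infimum of `f` is `r_y(y)`, attained at `s_y`;
(iii) otherwise the infimum of `f` equals the infimum of `‖Fs + c₀ − x‖` over the
set where `‖Fs + c₀ − x‖ = ‖Fs + c₀ − y‖`. -/
theorem relaxed_optimization_solution (d m : ℕ) (F : Matrix (Fin d) (Fin m) ℝ)
    (hF : Fᵀ * F = 1) (c₀ x y : EuclideanSpace ℝ (Fin d)) :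
    let g : EuclideanSpace ℝ (Fin m) → EuclideanSpace ℝ (Fin d) :=
      fun s => toE (F.mulVec (ofE s)) + c₀
    let f : EuclideanSpace ℝ (Fin m) → ℝ := fun s => max ‖g s - x‖ ‖g s - y‖
    let sx : EuclideanSpace ℝ (Fin m) := toE (Fᵀ.mulVec (ofE (x - c₀)))
    let sy : EuclideanSpace ℝ (Fin m) := toE (Fᵀ.mulVec (ofE (y - c₀)))
    let rxx : ℝ := ‖g sx - x‖
    let rxy : ℝ := ‖g sx - y‖
    let ryx : ℝ := ‖g sy - x‖
    let ryy : ℝ := ‖g sy - y‖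
    (rxx ≥ rxy → IsGLB (Set.range f) rxx ∧ f sx = rxx) ∧
      (ryy ≥ ryx → IsGLB (Set.range f) ryy ∧ f sy = ryy) ∧
      (rxx < rxy → ryy < ryx →
        sInf (Set.range f) =
          sInf ((fun s => ‖g s - x‖) '' {s | ‖g s - x‖ = ‖g s - y‖})) := by
  intro g f sx sy rxx rxy ryx ryy
  set T : EuclideanSpace ℝ (Fin m) →ₗ[ℝ] EuclideanSpace ℝ (Fin d) :=
    Matrix.toEuclideanLin F with hT
  set Tt : EuclideanSpace ℝ (Fin d) →ₗ[ℝ] EuclideanSpace ℝ (Fin m) :=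
    Matrix.toEuclideanLin Fᵀ with hTt
  have hadjT : Tt = LinearMap.adjoint T := by
    rw [hTt, hT, ← Matrix.toEuclideanLin_conjTranspose_eq_adjoint]
    congr 1
  have hadj : ∀ (u : EuclideanSpace ℝ (Fin m)) (v : EuclideanSpace ℝ (Fin d)),
      (inner ℝ (T u) v : ℝ) = inner ℝ u (Tt v) := by
    intro u v
    rw [hadjT, LinearMap.adjoint_inner_right]
  have hTtT : ∀ u : EuclideanSpace ℝ (Fin m), Tt (T u) = u := by
    intro u
    show toE (Fᵀ.mulVec (F.mulVec (ofE u))) = u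
    rw [Matrix.mulVec_mulVec, hF, Matrix.one_mulVec]
    rfl
  have hg : ∀ s, g s = T s + c₀ := fun _ => rfl
  -- the candidate points are the projections
  have hsx : sx = Tt (x - c₀) := rfl
  have hsy : sy = Tt (y - c₀) := rfl
  -- orthogonality / Pythagoras
  have horth : ∀ (z : EuclideanSpace ℝ (Fin d)) (s : EuclideanSpace ℝ (Fin m)),
      (inner ℝ (g s - g (Tt (z - c₀))) (g (Tt (z - c₀)) - z) : ℝ) = 0 := by
    intro z s
    have e1 : g s - g (Tt (z - c₀)) = T (s - Tt (z - c₀)) := by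
      rw [hg, hg, show T (s - Tt (z - c₀)) = T s - T (Tt (z - c₀)) from map_sub T _ _]
      exact add_sub_add_right_eq_sub (T s) (T (Tt (z - c₀))) c₀
    have e2 : g (Tt (z - c₀)) - z = T (Tt (z - c₀)) - (z - c₀) := by
      rw [hg, sub_sub_eq_add_sub, add_sub_right_comm]
    rw [e1, e2, inner_sub_right, hadj, hadj, hTtT]
    exact sub_self _
  have pyth : ∀ (z : EuclideanSpace ℝ (Fin d)) (s : EuclideanSpace ℝ (Fin m)),
      ‖g s - z‖ ^ 2 = ‖g s - g (Tt (z - c₀))‖ ^ 2 + ‖g (Tt (z - c₀)) - z‖ ^ 2 := by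
    intro z s
    have e : g s - z = (g s - g (Tt (z - c₀))) + (g (Tt (z - c₀)) - z) := by abel
    rw [e, norm_add_sq_real, horth]
    ring
  have hmin : ∀ (z : EuclideanSpace ℝ (Fin d)) (s : EuclideanSpace ℝ (Fin m)),
      ‖g (Tt (z - c₀)) - z‖ ≤ ‖g s - z‖ := by
    intro z s
    have h := pyth z s
    nlinarith [norm_nonneg (g s - g (Tt (z - c₀))), norm_nonneg (g (Tt (z - c₀)) - z),
      norm_nonneg (g s - z), sq_nonneg (‖g s - z‖ - ‖g (Tt (z - c₀)) - z‖)]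
  have hminx : ∀ s, rxx ≤ ‖g s - x‖ := fun s => hmin x s
  have hminy : ∀ s, ryy ≤ ‖g s - y‖ := fun s => hmin y s
  -- affine structure of g along segments
  have haff : ∀ (a b : EuclideanSpace ℝ (Fin m)) (t : ℝ) (z : EuclideanSpace ℝ (Fin d)),
      g (a + t • (b - a)) - z = (1 - t) • (g a - z) + t • (g b - z) := by
    intro a b t z
    rw [hg, hg, hg, map_add, LinearMap.map_smul, map_sub]
    generalize T a = u
    generalize T b = v
    module
  have hconv : ∀ (a b : EuclideanSpace ℝ (Fin m)) (t : ℝ), 0 ≤ t → t ≤ 1 →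
      ∀ z, ‖g (a + t • (b - a)) - z‖ ≤ (1 - t) * ‖g a - z‖ + t * ‖g b - z‖ := by
    intro a b t ht0 ht1 z
    rw [haff]
    calc ‖(1 - t) • (g a - z) + t • (g b - z)‖
        ≤ ‖(1 - t) • (g a - z)‖ + ‖t • (g b - z)‖ := norm_add_le _ _
      _ = (1 - t) * ‖g a - z‖ + t * ‖g b - z‖ := by
          rw [norm_smul, norm_smul, Real.norm_eq_abs, Real.norm_eq_abs,
            abs_of_nonneg ht0, abs_of_nonneg (by linarith)]
  -- intermediate value theorem along segments
  have hIVT : ∀ (a b : EuclideanSpace ℝ (Fin m)),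
      ‖g a - x‖ - ‖g a - y‖ ≤ 0 → 0 ≤ ‖g b - x‖ - ‖g b - y‖ →
      ∃ t ∈ Set.Icc (0 : ℝ) 1, ‖g (a + t • (b - a)) - x‖ = ‖g (a + t • (b - a)) - y‖ := by
    intro a b ha hb
    have key : ∀ t : ℝ, g (a + t • (b - a)) = g a + t • (g b - g a) := by
      intro t
      have h2 := haff a b t 0
      rw [sub_zero, sub_zero, sub_zero] at h2
      rw [h2]
      generalize g a = u
      generalize g b = v
      module
    have hcont : Continuous (fun t : ℝ =>
        ‖g (a + t • (b - a)) - x‖ - ‖g (a + t • (b - a)) - y‖) := by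
      have e : (fun t : ℝ =>
          ‖g (a + t • (b - a)) - x‖ - ‖g (a + t • (b - a)) - y‖)
          = fun t : ℝ => ‖g a + t • (g b - g a) - x‖ - ‖g a + t • (g b - g a) - y‖ := by
        funext t; rw [key]
      rw [e]
      have hc : Continuous (fun t : ℝ => g a + t • (g b - g a)) :=
        continuous_const.add (continuous_id.smul continuous_const)
      exact ((hc.sub continuous_const).norm).sub ((hc.sub continuous_const).norm)
    have h0 : a + (0 : ℝ) • (b - a) = a := by simp
    have h1 : a + (1 : ℝ) • (b - a) = b := by simp
    have hmem : (0 : ℝ) ∈ Set.Icc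
        ((fun t : ℝ => ‖g (a + t • (b - a)) - x‖ - ‖g (a + t • (b - a)) - y‖) 0)
        ((fun t : ℝ => ‖g (a + t • (b - a)) - x‖ - ‖g (a + t • (b - a)) - y‖) 1) := by
      simp only [h0, h1]
      exact ⟨ha, hb⟩
    obtain ⟨t, ht, heq⟩ := intermediate_value_Icc (le_of_lt one_pos)
      (hcont.continuousOn) hmem
    simp only at heq
    exact ⟨t, ht, sub_eq_zero.mp heq⟩
  refine ⟨?_, ?_, ?_⟩
  · -- case (i)
    intro h
    have hfsx : f sx = rxx := max_eq_left h
    refine ⟨⟨?_, ?_⟩, hfsx⟩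
    · rintro r ⟨s, rfl⟩
      exact le_trans (hminx s) (le_max_left _ _)
    · intro b hb
      have := hb ⟨sx, rfl⟩
      rw [hfsx] at this
      exact this
  · -- case (ii)
    intro h
    have hfsy : f sy = ryy := max_eq_right h
    refine ⟨⟨?_, ?_⟩, hfsy⟩
    · rintro r ⟨s, rfl⟩
      exact le_trans (hminy s) (le_max_right _ _)
    · intro b hb
      have := hb ⟨sy, rfl⟩
      rw [hfsy] at this
      exact this
  · -- case (iii)
    intro h1 h2
    set S : Set (EuclideanSpace ℝ (Fin m)) := {s | ‖g s - x‖ = ‖g s - y‖} with hS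
    set B : Set ℝ := (fun s => ‖g s - x‖) '' S with hB
    set A : Set ℝ := Set.range f with hA
    have hBsubA : B ⊆ A := by
      rintro r ⟨s, hs, rfl⟩
      exact ⟨s, max_eq_left (le_of_eq hs.symm)⟩
    have hAbdd : BddBelow A := by
      refine ⟨0, ?_⟩
      rintro r ⟨s, rfl⟩
      exact le_trans (norm_nonneg _) (le_max_left _ _)
    have hBbdd : BddBelow B := by
      refine ⟨0, ?_⟩
      rintro r ⟨s, _, rfl⟩
      exact norm_nonneg _
    have hAne : A.Nonempty := ⟨f sx, sx, rfl⟩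
    have hBne : B.Nonempty := by
      obtain ⟨t, _, heq⟩ := hIVT sx sy (sub_nonpos.mpr h1.le) (sub_nonneg.mpr h2.le)
      exact ⟨‖g (sx + t • (sy - sx)) - x‖, ⟨_, heq, rfl⟩⟩
    apply le_antisymm
    · exact csInf_le_csInf hAbdd hBne hBsubA
    · apply le_csInf hAne
      rintro r ⟨s, rfl⟩
      rcases le_total ‖g s - y‖ ‖g s - x‖ with hc | hc
      · -- f s = ‖g s - x‖, move toward sx
        obtain ⟨t, ⟨ht0, ht1⟩, heq⟩ := hIVT sx s (sub_nonpos.mpr h1.le) (sub_nonneg.mpr hc)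
        have hle : ‖g (sx + t • (s - sx)) - x‖ ≤ ‖g s - x‖ := by
          have := hconv sx s t ht0 ht1 x
          have hr : rxx ≤ ‖g s - x‖ := hminx s
          nlinarith
        have hfs : f s = ‖g s - x‖ := max_eq_left hc
        calc sInf B ≤ ‖g (sx + t • (s - sx)) - x‖ := csInf_le hBbdd ⟨_, heq, rfl⟩
          _ ≤ ‖g s - x‖ := hle
          _ = f s := hfs.symm
      · -- f s = ‖g s - y‖, move toward sy
        obtain ⟨t, ⟨ht0, ht1⟩, heq⟩ := hIVT s sy (sub_nonpos.mpr hc) (sub_nonneg.mpr h2.le)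
        have hle : ‖g (s + t • (sy - s)) - y‖ ≤ ‖g s - y‖ := by
          have := hconv s sy t ht0 ht1 y
          have hr : ryy ≤ ‖g s - y‖ := hminy s
          nlinarith
        have hfs : f s = ‖g s - y‖ := max_eq_right hc
        calc sInf B ≤ ‖g (s + t • (sy - s)) - x‖ := csInf_le hBbdd ⟨_, heq, rfl⟩
          _ = ‖g (s + t • (sy - s)) - y‖ := heq
          _ ≤ ‖g s - y‖ := hle
          _ = f s := hfs.symm
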